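/- Let A be a finite NM algebra and let ν : A → ℝ be its idempotent Euler characteristic. Then for every a ∈ A, ν(a) equals the number of NM homomorphisms h : A → 𝟯 from A to the three-element NM chain 𝟯 such that h(a) = 1. -/

import Mathlib

/-- A valuation on a lattice: ν(x)+ν(y) = ν(x⊔y)+ν(x⊓y). -/
def IsValuation {α : Type*} [Lattice α] (ν : α → ℝ) : Prop :=
  ∀ x y : α, ν x + ν y = ν (x ⊔ y) + ν (x ⊓ y)

/-- Join-irreducible element of a lattice with bottom. -/
def JoinIrred {α : Type*} [Lattice α] [OrderBot α] (x : α) : Prop :=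
  x ≠ ⊥ ∧ ∀ y z : α, x = y ⊔ z → x = y ∨ x = z

/-- An NM algebra: a bounded distributive lattice with a commutative monoidal
operation `odot` (unit ⊤) and its residuum `himp`, satisfying prelinearity,
the weak nilpotent minimum law and involutivity of the negation ¬x = x → ⊥. -/
class NMAlgebra (α : Type*) extends DistribLattice α, BoundedOrder α where
  odot : α → α → α
  himp : α → α → α
  odot_comm : ∀ x y : α, odot x y = odot y x
  odot_assoc : ∀ x y z : α, odot (odot x y) z = odot x (odot y z)
  odot_top : ∀ x : α, odot x ⊤ = x
  residuation : ∀ x y z : α, odot x y ≤ z ↔ x ≤ himp y z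
  prelinearity : ∀ x y : α, himp x y ⊔ himp y x = ⊤
  wnm : ∀ x y : α, himp (odot x y) ⊥ ⊔ himp (x ⊓ y) (odot x y) = ⊤
  involution : ∀ x : α, himp (himp x ⊥) ⊥ = x

/-- Negation in an NM algebra: ¬x = x → ⊥. -/
def NMAlgebra.neg {α : Type*} [NMAlgebra α] (x : α) : α := NMAlgebra.himp x ⊥

/-- A filter of an NM algebra: a nonempty upper set closed under ⊙. -/
def NMAlgebra.IsFilter {α : Type*} [NMAlgebra α] (S : Set α) : Prop :=
  S.Nonempty ∧ (∀ x y : α, x ∈ S → x ≤ y → y ∈ S) ∧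
    ∀ x y : α, x ∈ S → y ∈ S → NMAlgebra.odot x y ∈ S

/-- A prime filter: a proper filter such that x⊔y ∈ S implies x ∈ S or y ∈ S. -/
def NMAlgebra.IsPrimeFilter {α : Type*} [NMAlgebra α] (S : Set α) : Prop :=
  NMAlgebra.IsFilter S ∧ S ≠ Set.univ ∧ ∀ x y : α, x ⊔ y ∈ S → x ∈ S ∨ y ∈ S

/-- A maximal prime filter: a prime filter maximal w.r.t. inclusion among proper filters. -/
def NMAlgebra.IsMaximalPrimeFilter {α : Type*} [NMAlgebra α] (S : Set α) : Prop :=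
  NMAlgebra.IsPrimeFilter S ∧
    ∀ T : Set α, NMAlgebra.IsFilter T → T ≠ Set.univ → S ⊆ T → T = S

/-- The idempotent Euler characteristic: the valuation with ν(⊥)=0, ν(g)=1 on
idempotent join-irreducibles and ν(g)=0 on the other join-irreducibles. -/
def IsIdemEuler {α : Type*} [NMAlgebra α] (ν : α → ℝ) : Prop :=
  IsValuation ν ∧ ν ⊥ = 0 ∧
    ∀ g : α, JoinIrred g →
      (NMAlgebra.odot g g = g → ν g = 1) ∧ (NMAlgebra.odot g g ≠ g → ν g = 0)

/-- Negation on the three-element NM chain 𝟯 = {0, ½, 1}, modelled as `Fin 3`. -/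
def neg3 : Fin 3 → Fin 3 := ![2, 1, 0]

/-- The monoidal operation of 𝟯: x⊙y = min(x,y) if x > ¬y, and 0 otherwise. -/
def odot3 (x y : Fin 3) : Fin 3 := if neg3 y < x then min x y else 0

/-- The residuum of 𝟯: x→y = 1 if x ≤ y, and max(¬x,y) otherwise. -/
def himp3 (x y : Fin 3) : Fin 3 := if x ≤ y then 2 else max (neg3 x) y

/-- NM homomorphisms into the three-element NM chain 𝟯 (as `Fin 3`, top element `2`). -/
def IsHom3 {α : Type*} [NMAlgebra α] (h : α → Fin 3) : Prop :=
  h ⊥ = 0 ∧ h ⊤ = 2 ∧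
  (∀ x y : α, h (x ⊓ y) = min (h x) (h y)) ∧
  (∀ x y : α, h (x ⊔ y) = max (h x) (h y)) ∧
  (∀ x y : α, h (NMAlgebra.odot x y) = odot3 (h x) (h y)) ∧
  (∀ x y : α, h (NMAlgebra.himp x y) = himp3 (h x) (h y))

/-- Negation on the two-element NM chain 𝟚 = {0, 1}, modelled as `Fin 2`. -/
def neg2 : Fin 2 → Fin 2 := ![1, 0]

/-- The monoidal operation of 𝟚 is ∧ (Boolean). -/
def odot2 (x y : Fin 2) : Fin 2 := min x y

/-- The residuum of 𝟚: Boolean implication x→y = max(¬x, y). -/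
def himp2 (x y : Fin 2) : Fin 2 := max (neg2 x) y

/-- NM homomorphisms into the two-element NM chain 𝟚 (as `Fin 2`, top element `1`). -/
def IsHom2 {α : Type*} [NMAlgebra α] (h : α → Fin 2) : Prop :=
  h ⊥ = 0 ∧ h ⊤ = 1 ∧
  (∀ x y : α, h (x ⊓ y) = min (h x) (h y)) ∧
  (∀ x y : α, h (x ⊔ y) = max (h x) (h y)) ∧
  (∀ x y : α, h (NMAlgebra.odot x y) = odot2 (h x) (h y)) ∧
  (∀ x y : α, h (NMAlgebra.himp x y) = himp2 (h x) (h y))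

/-- The nilpotent minimum t-norm on ℝ (intended on [0,1]). -/
noncomputable def nmT (x y : ℝ) : ℝ := if 1 < x + y then min x y else 0

/-- The residuum of the nilpotent minimum t-norm on ℝ (intended on [0,1]). -/
noncomputable def nmImp (x y : ℝ) : ℝ := if x ≤ y then 1 else max (1 - x) y


namespace NMAux
open NMAlgebra

variable {A : Type*} [NMAlgebra A]

instance commMonoid : CommMonoid A where
  mul := odot
  one := ⊤
  mul_assoc := odot_assoc
  one_mul := fun x => by
    show odot ⊤ x = x
    rw [odot_comm]; exact odot_top x
  mul_one := odot_top
  mul_comm := odot_comm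

theorem mul_def (x y : A) : x * y = odot x y := rfl
theorem one_def : (1 : A) = ⊤ := rfl

theorem resid {x y z : A} : x * y ≤ z ↔ x ≤ himp y z := residuation x y z

theorem himp_mul_le (y z : A) : himp y z * y ≤ z := resid.mpr le_rfl

theorem omul_mono {x y : A} (h : x ≤ y) (z : A) : x * z ≤ y * z :=
  resid.mpr (le_trans h (resid.mp le_rfl))

instance : CovariantClass A A (· * ·) (· ≤ ·) :=
  ⟨fun z x y h => by rw [mul_comm z x, mul_comm z y]; exact omul_mono h z⟩

instance : CovariantClass A A (Function.swap (· * ·)) (· ≤ ·) :=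
  ⟨fun z x y h => omul_mono h z⟩

theorem mul_le_left (x y : A) : x * y ≤ x := by
  calc x * y ≤ x * 1 := mul_le_mul_right (le_top : y ≤ (1:A)) x
  _ = x := mul_one x

theorem mul_le_right (x y : A) : x * y ≤ y := by rw [mul_comm]; exact mul_le_left y x

theorem neg_mul_self (x : A) : neg x * x = ⊥ :=
  le_bot_iff.mp (himp_mul_le x ⊥)

theorem mul_neg_self (x : A) : x * neg x = ⊥ := by rw [mul_comm]; exact neg_mul_self x

theorem le_neg_comm {x y : A} : x ≤ neg y ↔ y ≤ neg x := by
  unfold NMAlgebra.neg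
  rw [← resid, ← resid, mul_comm]

theorem neg_antitone {x y : A} (h : x ≤ y) : neg y ≤ neg x :=
  resid.mp (le_trans (mul_le_mul_right h _) (neg_mul_self y).le)

theorem neg_neg_ (x : A) : neg (neg x) = x := involution x

theorem neg_bot : neg (⊥ : A) = ⊤ :=
  le_antisymm le_top (resid.mp (by rw [show ((⊤:A) * ⊥) = ⊥ from one_mul ⊥]))

theorem neg_top : neg (⊤ : A) = ⊥ := by rw [← neg_bot, neg_neg_]

theorem le_himp_right (x y : A) : y ≤ himp x y := resid.mp (mul_le_left y x)

theorem neg_le_himp (x y : A) : neg x ≤ himp x y :=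
  resid.mp (le_trans (neg_mul_self x).le bot_le)

theorem le_himp_of_le {x y : A} (h : x ≤ y) : ⊤ ≤ himp x y :=
  resid.mp (by rw [show ((⊤:A) * x) = x from one_mul x]; exact h)

theorem himp_top_bot_le : himp (⊤:A) ⊥ ≤ ⊥ := by
  have := himp_mul_le (⊤:A) (⊥:A)
  rwa [show (himp (⊤:A) ⊥ * ⊤) = himp (⊤:A) ⊥ from mul_one _] at this

theorem mul_sup (x y z : A) : x * (y ⊔ z) = x * y ⊔ x * z := by
  apply le_antisymm
  · rw [mul_comm]
    apply resid.mpr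
    apply sup_le
    · exact resid.mp (by rw [mul_comm]; exact le_sup_left)
    · exact resid.mp (by rw [mul_comm]; exact le_sup_right)
  · exact sup_le (mul_le_mul_right le_sup_left x) (mul_le_mul_right le_sup_right x)

theorem neg_mul' (x y : A) : himp (x * y) ⊥ = himp x (neg y) := by
  apply le_antisymm
  · apply resid.mp
    apply resid.mp
    calc himp (x*y) ⊥ * x * y = himp (x*y) ⊥ * (x*y) := mul_assoc _ _ _
    _ ≤ ⊥ := himp_mul_le _ _
  · apply resid.mp
    calc himp x (neg y) * (x * y) = (himp x (neg y) * x) * y := (mul_assoc _ _ _).symm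
    _ ≤ neg y * y := mul_le_mul_left (himp_mul_le _ _) y
    _ = ⊥ := neg_mul_self y

theorem deMorgan_sup (x y : A) : neg (x ⊔ y) = neg x ⊓ neg y := by
  apply le_antisymm
  · exact le_inf (neg_antitone le_sup_left) (neg_antitone le_sup_right)
  · apply resid.mp
    rw [mul_sup]
    apply sup_le
    · exact le_trans (mul_le_mul_left inf_le_left x) (by rw [neg_mul_self])
    · exact le_trans (mul_le_mul_left inf_le_right y) (by rw [neg_mul_self])

theorem deMorgan_inf (x y : A) : neg (x ⊓ y) = neg x ⊔ neg y := by
  rw [show x ⊓ y = neg (neg x) ⊓ neg (neg y) by rw [neg_neg_, neg_neg_],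
    ← deMorgan_sup, neg_neg_]

end NMAux

namespace NMAux
open NMAlgebra

variable {A : Type*} [NMAlgebra A]

structure PF (F : Set A) : Prop where
  topm : (⊤:A) ∈ F
  up : ∀ {x y : A}, x ∈ F → x ≤ y → y ∈ F
  mulm : ∀ {x y : A}, x ∈ F → y ∈ F → x * y ∈ F
  botm : (⊥:A) ∉ F
  prime : ∀ {x y : A}, x ⊔ y ∈ F → x ∈ F ∨ y ∈ F

def Rel (F : Set A) (x y : A) : Prop := himp x y ∈ F

variable {F : Set A}

theorem Rof_le (hF : PF F) {x y : A} (h : x ≤ y) : Rel F x y :=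
  hF.up hF.topm (le_himp_of_le h)

theorem Rrefl (hF : PF F) (x : A) : Rel F x x := Rof_le hF le_rfl

theorem himp_trans (x y z : A) : himp x y * himp y z ≤ himp x z := by
  apply resid.mp
  calc himp x y * himp y z * x = himp y z * (himp x y * x) := by
        rw [mul_comm (himp x y) (himp y z), mul_assoc]
  _ ≤ himp y z * y := mul_le_mul_right (himp_mul_le x y) _
  _ ≤ z := himp_mul_le y z

theorem Rtrans (hF : PF F) {x y z : A} (h1 : Rel F x y) (h2 : Rel F y z) : Rel F x z :=
  hF.up (hF.mulm h1 h2) (himp_trans x y z)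

theorem Rmem (hF : PF F) {x y : A} (h : y ∈ F) : Rel F x y :=
  hF.up h (le_himp_right x y)

theorem Rmp (hF : PF F) {x y : A} (hx : x ∈ F) (h : Rel F x y) : y ∈ F :=
  hF.up (hF.mulm h hx) (himp_mul_le x y)

theorem Rbot (hF : PF F) (y : A) : Rel F ⊥ y := Rof_le hF bot_le

theorem notRtopbot (hF : PF F) : ¬ Rel F ⊤ ⊥ := fun h => hF.botm (hF.up h himp_top_bot_le)

theorem Rneg (hF : PF F) {x y : A} (h : Rel F x y) : Rel F (neg y) (neg x) := by
  apply hF.up h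
  apply resid.mp
  apply resid.mp
  calc himp x y * neg y * x = neg y * (himp x y * x) := by
        rw [mul_comm (himp x y) (neg y), mul_assoc]
  _ ≤ neg y * y := mul_le_mul_right (himp_mul_le x y) _
  _ = ⊥ := neg_mul_self y

theorem Rmul (hF : PF F) {x y : A} (h : Rel F x y) (z : A) : Rel F (x * z) (y * z) := by
  apply hF.up h
  apply resid.mp
  calc himp x y * (x * z) = (himp x y * x) * z := (mul_assoc _ _ _).symm
  _ ≤ y * z := mul_le_mul_left (himp_mul_le x y) z

theorem Rinf (hF : PF F) {z x y : A} (h1 : Rel F z x) (h2 : Rel F z y) : Rel F z (x ⊓ y) := by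
  apply hF.up (hF.mulm h1 h2)
  apply resid.mp
  apply le_inf
  · calc himp z x * himp z y * z = himp z x * (himp z y * z) := mul_assoc _ _ _
    _ ≤ himp z x * z := mul_le_mul_right (mul_le_right _ _) _
    _ ≤ x := himp_mul_le z x
  · calc himp z x * himp z y * z ≤ himp z y * z :=
        mul_le_mul_left (mul_le_right _ _) z
    _ ≤ y := himp_mul_le z y

theorem Rsup (hF : PF F) {x y z : A} (h1 : Rel F x z) (h2 : Rel F y z) : Rel F (x ⊔ y) z := by
  apply hF.up (hF.mulm h1 h2)
  apply resid.mp
  rw [mul_sup]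
  apply sup_le
  · calc himp x z * himp y z * x ≤ himp x z * x := mul_le_mul_left (mul_le_left _ _) x
    _ ≤ z := himp_mul_le x z
  · calc himp x z * himp y z * y ≤ himp y z * y := mul_le_mul_left (mul_le_right _ _) y
    _ ≤ z := himp_mul_le y z

theorem Rtot (hF : PF F) (x y : A) : Rel F x y ∨ Rel F y x :=
  hF.prime (by rw [prelinearity]; exact hF.topm)

theorem Rwnm (hF : PF F) (x y : A) : Rel F (x * y) ⊥ ∨ Rel F (x ⊓ y) (x * y) :=
  hF.prime (show himp (odot x y) ⊥ ⊔ himp (x ⊓ y) (odot x y) ∈ F by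
    rw [wnm x y]; exact hF.topm)

theorem Rel_mul_bot {x y : A} : Rel F (x * y) ⊥ ↔ Rel F x (neg y) := by
  unfold Rel
  rw [neg_mul']

/-- powers inequality -/
theorem pow_sup_le (x y : A) : ∀ n m : ℕ, (x ⊔ y) ^ (n + m) ≤ x ^ n ⊔ y ^ m := by
  intro n
  induction n with
  | zero =>
    intro m
    calc (x ⊔ y) ^ (0 + m) ≤ (1:A) := le_top
    _ = x ^ 0 := (pow_zero x).symm
    _ ≤ x ^ 0 ⊔ y ^ m := le_sup_left
  | succ n IHn =>
    intro m
    induction m with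
    | zero =>
      calc (x ⊔ y) ^ (n + 1 + 0) ≤ (1:A) := le_top
      _ = y ^ 0 := (pow_zero y).symm
      _ ≤ x ^ (n+1) ⊔ y ^ 0 := le_sup_right
    | succ m IHm =>
      have e : n + 1 + (m + 1) = (n + 1 + m) + 1 := by ring
      rw [e, pow_succ]
      have hA : (x ⊔ y) ^ (n + 1 + m) ≤ x ^ n ⊔ y ^ (m+1) := by
        have e2 : n + 1 + m = n + (m + 1) := by ring
        rw [e2]; exact IHn (m+1)
      rw [mul_sup]
      apply sup_le
      · calc (x ⊔ y) ^ (n+1+m) * x ≤ (x ^ n ⊔ y ^ (m+1)) * x := mul_le_mul_left hA x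
        _ = x ^ n * x ⊔ y ^ (m+1) * x := by rw [mul_comm, mul_sup, mul_comm x (x^n), mul_comm x (y^(m+1))]
        _ ≤ x ^ (n+1) ⊔ y ^ (m+1) := sup_le (by rw [← pow_succ]; exact le_sup_left)
            (le_trans (mul_le_left _ _) le_sup_right)
      · calc (x ⊔ y) ^ (n+1+m) * y ≤ (x ^ (n+1) ⊔ y ^ m) * y := mul_le_mul_left IHm y
        _ = x ^ (n+1) * y ⊔ y ^ m * y := by rw [mul_comm, mul_sup, mul_comm y (x^(n+1)), mul_comm y (y^m)]
        _ ≤ x ^ (n+1) ⊔ y ^ (m+1) := sup_le (le_trans (mul_le_left _ _) le_sup_left)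
            (by rw [← pow_succ]; exact le_sup_right)

def OFilt (F : Set A) : Prop :=
  (⊤:A) ∈ F ∧ (∀ x y : A, x ∈ F → x ≤ y → y ∈ F) ∧ (∀ x y : A, x ∈ F → y ∈ F → x * y ∈ F)

theorem OFilt.pow_mem {F : Set A} (hF : OFilt F) {z : A} (hz : z ∈ F) :
    ∀ k : ℕ, z ^ k ∈ F := by
  intro k
  induction k with
  | zero => rw [pow_zero]; exact hF.1
  | succ k IH => rw [pow_succ]; exact hF.2.2 _ _ IH hz

theorem transfer [Fintype A] {u v : A} (H : ∀ F : Set A, PF F → himp u v ∈ F) : u ≤ v := by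
  classical
  by_contra hle
  have hb : himp u v ∉ ({⊤} : Set A) := by
    intro h
    apply hle
    have : (⊤:A) ≤ himp u v := le_of_eq (Set.mem_singleton_iff.mp h).symm
    have := resid.mpr this
    rwa [show ((⊤:A) * u) = u from one_mul u] at this
  set S : Set (Set A) := {G | OFilt G ∧ himp u v ∉ G} with hS
  have hne : S.Nonempty := by
    refine ⟨({⊤} : Set A), ⟨rfl, ?_, ?_⟩, hb⟩
    · intro x y hx hxy
      have hx' : x = ⊤ := Set.mem_singleton_iff.mp hx
      exact Set.mem_singleton_iff.mpr (le_antisymm le_top (hx' ▸ hxy))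
    · intro x y hx hy
      rw [Set.mem_singleton_iff.mp hx, Set.mem_singleton_iff.mp hy]
      exact Set.mem_singleton_iff.mpr (mul_one ⊤)
  obtain ⟨F, hFS, hmax⟩ := Set.Finite.exists_maximalFor id S (Set.toFinite S) hne
  have hOF : OFilt F := hFS.1
  have hbF : himp u v ∉ F := hFS.2
  have hprime : ∀ x y : A, x ⊔ y ∈ F → x ∈ F ∨ y ∈ F := by
    intro x y hxy
    by_contra hcon
    push_neg at hcon
    obtain ⟨hx, hy⟩ := hcon
    have ext : ∀ w : A, w ∉ F → ∃ f ∈ F, ∃ n : ℕ, f * w ^ n ≤ himp u v := by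
      intro w hw
      set Fw : Set A := {t | ∃ f ∈ F, ∃ n : ℕ, f * w ^ n ≤ t} with hFw
      have hOFw : OFilt Fw := by
        refine ⟨⟨⊤, hOF.1, 0, le_top⟩, ?_, ?_⟩
        · rintro s t ⟨f, hf, n, hfn⟩ hst
          exact ⟨f, hf, n, le_trans hfn hst⟩
        · rintro s t ⟨f, hf, n, hfn⟩ ⟨f', hf', n', hfn'⟩
          refine ⟨f * f', hOF.2.2 _ _ hf hf', n + n', ?_⟩
          calc f * f' * w ^ (n + n') = (f * w ^ n) * (f' * w ^ n') := by
                rw [pow_add]; exact mul_mul_mul_comm f f' (w^n) (w^n')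
          _ ≤ s * t := mul_le_mul' hfn hfn'
      have hsub : F ⊆ Fw := by
        intro f hf
        exact ⟨f, hf, 0, by rw [pow_zero, mul_one]⟩
      have hwmem : w ∈ Fw := ⟨⊤, hOF.1, 1, by rw [pow_one, show ((⊤:A) * w) = w from one_mul w]⟩
      by_contra hno
      push_neg at hno
      have hbw : himp u v ∈ Fw := by
        by_contra hbw
        have : Fw ∈ S := ⟨hOFw, hbw⟩
        have heq : F = Fw := le_antisymm hsub (hmax this hsub)
        rw [heq] at hw
        exact hw hwmem
      obtain ⟨f, hf, n, hfn⟩ := hbw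
      exact hno f hf n hfn
    obtain ⟨f1, hf1, n, h1⟩ := ext x hx
    obtain ⟨f2, hf2, m, h2⟩ := ext y hy
    apply hbF
    have hc : f1 * f2 * (x ⊔ y) ^ (n + m) ∈ F :=
      hOF.2.2 _ _ (hOF.2.2 _ _ hf1 hf2) (OFilt.pow_mem hOF hxy (n+m))
    apply hOF.2.1 _ _ hc
    calc f1 * f2 * (x ⊔ y) ^ (n+m) ≤ f1 * f2 * (x ^ n ⊔ y ^ m) :=
        mul_le_mul_right (pow_sup_le x y n m) _
    _ = f1 * f2 * x ^ n ⊔ f1 * f2 * y ^ m := mul_sup _ _ _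
    _ ≤ himp u v ⊔ himp u v := by
        apply sup_le_sup
        · calc f1 * f2 * x ^ n = f1 * x ^ n * f2 := mul_right_comm f1 f2 (x^n)
          _ ≤ himp u v * f2 := mul_le_mul_left h1 f2
          _ ≤ himp u v := mul_le_left _ _
        · calc f1 * f2 * y ^ m = f1 * (f2 * y ^ m) := mul_assoc _ _ _
          _ ≤ f1 * himp u v := mul_le_mul_right h2 f1
          _ ≤ himp u v := mul_le_right _ _
    _ = himp u v := sup_idem _
  have hPF : PF F :=
    ⟨hOF.1, fun hx hxy => hOF.2.1 _ _ hx hxy, fun hx hy => hOF.2.2 _ _ hx hy,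
     fun h => hbF (hOF.2.1 _ _ h bot_le), fun h => hprime _ _ h⟩
  exact hbF (H F hPF)

end NMAux

namespace NMAux
open NMAlgebra

variable {A : Type*} [NMAlgebra A]

theorem himp_eq_neg_mul [Fintype A] (x y : A) : himp x y = neg (x * neg y) := by
  apply le_antisymm
  · apply resid.mp
    calc himp x y * (x * neg y) = (himp x y * x) * neg y := (mul_assoc _ _ _).symm
    _ ≤ y * neg y := mul_le_mul_left (himp_mul_le x y) _
    _ = ⊥ := mul_neg_self y
  · apply transfer; intro F hF
    show Rel F (neg (x * neg y)) (himp x y)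
    by_cases hxy : himp x y ∈ F
    · exact Rmem hF hxy
    · rcases Rwnm hF x (neg y) with h1 | h2
      · exfalso
        apply hxy
        have h1' : Rel F x (neg (neg y)) := Rel_mul_bot.mp h1
        rwa [neg_neg_] at h1'
      · have h3 := Rneg hF h2
        have e : neg (x ⊓ neg y) = neg x ⊔ y := by rw [deMorgan_inf, neg_neg_]
        rw [e] at h3
        exact Rtrans hF h3 (Rof_le hF (sup_le (neg_le_himp x y) (le_himp_right x y)))

theorem idem_decomp [Fintype A] (x : A) : x = x * x ⊔ (x ⊓ neg x) := by
  apply le_antisymm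
  · apply transfer; intro F hF
    show Rel F x (x * x ⊔ (x ⊓ neg x))
    rcases Rwnm hF x x with h1 | h2
    · have h1' : Rel F x (neg x) := Rel_mul_bot.mp h1
      exact Rtrans hF (Rinf hF (Rrefl hF x) h1') (Rof_le hF le_sup_right)
    · rw [inf_idem] at h2
      exact Rtrans hF h2 (Rof_le hF le_sup_left)
  · exact sup_le (mul_le_left x x) inf_le_left

theorem idem_inf_le [Fintype A] {m m' : A} (hm : m * m = m) (hm' : m' * m' = m') :
    m ⊓ m' ≤ m * m' := by
  apply transfer; intro F hF
  show Rel F (m ⊓ m') (m * m')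
  rcases Rwnm hF m m' with h1 | h2
  · rcases Rtot hF m m' with hmm | hmm
    · have t1 : Rel F (m * m) (m' * m) := Rmul hF hmm m
      rw [hm, mul_comm m' m] at t1
      have t2 : Rel F m ⊥ := Rtrans hF t1 h1
      exact Rtrans hF (Rtrans hF (Rof_le hF inf_le_left) t2) (Rbot hF _)
    · have t1 : Rel F (m' * m') (m * m') := Rmul hF hmm m'
      rw [hm', mul_comm m m'] at t1
      rw [mul_comm m m'] at h1
      have t2 : Rel F m' ⊥ := Rtrans hF t1 h1
      rw [mul_comm m m']
      exact Rtrans hF (Rtrans hF (Rof_le hF inf_le_right) t2) (Rbot hF _)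
  · exact h2

end NMAux

namespace NMAux
open NMAlgebra

variable {A : Type*} [NMAlgebra A]

theorem fin3cases : ∀ p : Fin 3, p = 0 ∨ p = 1 ∨ p = 2 := by decide

open scoped Classical in
noncomputable def sgn (F : Set A) : A → Fin 3 := fun x =>
  if Rel F x (neg x) then (if Rel F (neg x) x then 1 else 0) else 2

variable {F : Set A}

theorem sgn_eq_two_iff {x : A} : sgn F x = 2 ↔ ¬ Rel F x (neg x) := by
  unfold sgn
  split_ifs with h1 h2 <;> first | simp [h1, h2] | simp [h1]

theorem sgn_eq_one_iff {x : A} : sgn F x = 1 ↔ (Rel F x (neg x) ∧ Rel F (neg x) x) := by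
  unfold sgn
  split_ifs with h1 h2 <;> first | simp [h1, h2] | simp [h1]

theorem sgn_eq_zero_iff {x : A} : sgn F x = 0 ↔ (Rel F x (neg x) ∧ ¬ Rel F (neg x) x) := by
  unfold sgn
  split_ifs with h1 h2 <;> first | simp [h1, h2] | simp [h1]

theorem sgn_mono (hF : PF F) {x y : A} (hxy : Rel F x y) : sgn F x ≤ sgn F y := by
  rcases fin3cases (sgn F x) with e | e | e
  · rw [e]; exact Fin.zero_le _
  · obtain ⟨r1, r2⟩ := sgn_eq_one_iff.mp e
    have hy0 : sgn F y ≠ 0 := by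
      intro hy
      obtain ⟨s1, s2⟩ := sgn_eq_zero_iff.mp hy
      exact s2 (Rtrans hF (Rtrans hF (Rneg hF hxy) r2) hxy)
    rw [e]
    rcases fin3cases (sgn F y) with f | f | f
    · exact absurd f hy0
    · rw [f]
    · rw [f]; decide
  · have h2 : sgn F y = 2 := by
      rw [sgn_eq_two_iff]
      intro hy
      exact sgn_eq_two_iff.mp e (Rtrans hF (Rtrans hF hxy hy) (Rneg hF hxy))
    rw [e, h2]

theorem sgn_cong (hF : PF F) {x y : A} (h1 : Rel F x y) (h2 : Rel F y x) :
    sgn F x = sgn F y :=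
  le_antisymm (sgn_mono hF h1) (sgn_mono hF h2)

theorem sgn_bot (hF : PF F) : sgn F (⊥:A) = 0 := by
  rw [sgn_eq_zero_iff]
  constructor
  · exact Rbot hF _
  · rw [neg_bot]; exact notRtopbot hF

theorem sgn_top (hF : PF F) : sgn F (⊤:A) = 2 := by
  rw [sgn_eq_two_iff, neg_top]
  exact notRtopbot hF

theorem sgn_of_Rbot (hF : PF F) {u : A} (h : Rel F u ⊥) : sgn F u = 0 := by
  rw [sgn_eq_zero_iff]
  refine ⟨Rtrans hF h (Rbot hF _), ?_⟩
  intro r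
  have t := Rneg hF h
  rw [neg_bot] at t
  exact notRtopbot hF (Rtrans hF t (Rtrans hF r h))

theorem sgn_neg (hF : PF F) (x : A) : sgn F (neg x) = neg3 (sgn F x) := by
  rcases fin3cases (sgn F x) with e | e | e
  · obtain ⟨r1, r2⟩ := sgn_eq_zero_iff.mp e
    rw [e]
    rw [show neg3 0 = 2 from rfl, sgn_eq_two_iff, neg_neg_]
    exact r2
  · obtain ⟨r1, r2⟩ := sgn_eq_one_iff.mp e
    rw [e]
    rw [show neg3 1 = 1 from rfl, sgn_eq_one_iff, neg_neg_]
    exact ⟨r2, r1⟩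
  · have r := sgn_eq_two_iff.mp e
    rw [e]
    rw [show neg3 2 = 0 from rfl, sgn_eq_zero_iff, neg_neg_]
    rcases Rtot hF x (neg x) with h | h
    · exact absurd h r
    · exact ⟨h, r⟩

theorem sgn_inf (hF : PF F) (x y : A) : sgn F (x ⊓ y) = min (sgn F x) (sgn F y) := by
  rcases Rtot hF x y with h | h
  · have e1 : Rel F (x ⊓ y) x := Rof_le hF inf_le_left
    have e2 : Rel F x (x ⊓ y) := Rinf hF (Rrefl hF x) h
    rw [sgn_cong hF e1 e2, min_eq_left (sgn_mono hF h)]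
  · have e1 : Rel F (x ⊓ y) y := Rof_le hF inf_le_right
    have e2 : Rel F y (x ⊓ y) := Rinf hF h (Rrefl hF y)
    rw [sgn_cong hF e1 e2, min_eq_right (sgn_mono hF h)]

theorem sgn_sup (hF : PF F) (x y : A) : sgn F (x ⊔ y) = max (sgn F x) (sgn F y) := by
  rcases Rtot hF x y with h | h
  · have e1 : Rel F (x ⊔ y) y := Rsup hF h (Rrefl hF y)
    have e2 : Rel F y (x ⊔ y) := Rof_le hF le_sup_right
    rw [sgn_cong hF e1 e2, max_eq_right (sgn_mono hF h)]
  · have e1 : Rel F (x ⊔ y) x := Rsup hF (Rrefl hF x) h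
    have e2 : Rel F x (x ⊔ y) := Rof_le hF le_sup_left
    rw [sgn_cong hF e1 e2, max_eq_left (sgn_mono hF h)]

theorem odot3_comm : ∀ p q : Fin 3, odot3 p q = odot3 q p := by decide

theorem sgn_mul_aux (hF : PF F) {x y : A} (hxy : Rel F x y) :
    sgn F (x * y) = odot3 (sgn F x) (sgn F y) := by
  have hmono := sgn_mono hF hxy
  rcases fin3cases (sgn F x) with ex | ex | ex
  · rw [ex, show ∀ q : Fin 3, odot3 0 q = 0 by decide]
    have h1 : sgn F (x * y) ≤ sgn F x := sgn_mono hF (Rof_le hF (mul_le_left x y))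
    rw [ex] at h1
    exact Fin.le_zero_iff.mp h1
  · obtain ⟨r1, r2⟩ := sgn_eq_one_iff.mp ex
    rcases fin3cases (sgn F y) with ey | ey | ey
    · rw [ex, ey] at hmono; exact absurd hmono (by decide)
    · -- both 1
      obtain ⟨s1, s2⟩ := sgn_eq_one_iff.mp ey
      rw [ex, ey, show odot3 1 1 = 0 from rfl]
      apply sgn_of_Rbot hF
      have hyx : Rel F y x := Rtrans hF (Rtrans hF s1 (Rneg hF hxy)) r2
      have t1 : Rel F (x * y) (x * x) := by
        rw [mul_comm x y]
        exact Rmul hF hyx x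
      have t2 : Rel F (x * x) ⊥ := by
        have := Rmul hF r1 x
        rwa [neg_mul_self x] at this
      exact Rtrans hF t1 t2
    · -- x:1, y:2
      have s2 := sgn_eq_two_iff.mp ey
      rw [ex, ey, show odot3 1 2 = 1 from rfl]
      rcases Rwnm hF x y with h1 | h2
      · exfalso
        have h1' : Rel F x (neg y) := Rel_mul_bot.mp h1
        have t := Rneg hF h1'
        rw [neg_neg_] at t
        exact s2 (Rtrans hF (Rtrans hF t r2) h1')
      · have t : Rel F x (x * y) := Rtrans hF (Rinf hF (Rrefl hF x) hxy) h2
        rw [sgn_cong hF (Rof_le hF (mul_le_left x y)) t, ex]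
  · rcases fin3cases (sgn F y) with ey | ey | ey
    · rw [ex, ey] at hmono; exact absurd hmono (by decide)
    · rw [ex, ey] at hmono; exact absurd hmono (by decide)
    · have r2 := sgn_eq_two_iff.mp ex
      rw [ex, ey, show odot3 2 2 = 2 from rfl]
      rcases Rwnm hF x y with h1 | h2
      · exfalso
        have h1' : Rel F x (neg y) := Rel_mul_bot.mp h1
        have t := Rneg hF h1'
        rw [neg_neg_] at t
        exact r2 (Rtrans hF hxy t)
      · have t : Rel F x (x * y) := Rtrans hF (Rinf hF (Rrefl hF x) hxy) h2
        rw [sgn_cong hF (Rof_le hF (mul_le_left x y)) t, ex]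

theorem sgn_mul (hF : PF F) (x y : A) : sgn F (x * y) = odot3 (sgn F x) (sgn F y) := by
  rcases Rtot hF x y with h | h
  · exact sgn_mul_aux hF h
  · rw [mul_comm x y, odot3_comm]
    exact sgn_mul_aux hF h

theorem sgn_himp [Fintype A] (hF : PF F) (x y : A) :
    sgn F (himp x y) = himp3 (sgn F x) (sgn F y) := by
  rw [himp_eq_neg_mul x y, sgn_neg hF, sgn_mul hF, sgn_neg hF]
  exact (show ∀ p q : Fin 3, neg3 (odot3 p (neg3 q)) = himp3 p q by decide) _ _

def upF (g : A) : Set A := {x | g ≤ x}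

theorem ji_le_sup {g : A} (hg : JoinIrred g) {x y : A} (h : g ≤ x ⊔ y) : g ≤ x ∨ g ≤ y := by
  have e : g = (g ⊓ x) ⊔ (g ⊓ y) := by rw [← inf_sup_left, inf_eq_left.mpr h]
  rcases hg.2 _ _ e with h' | h'
  · exact Or.inl (inf_eq_left.mp h'.symm)
  · exact Or.inr (inf_eq_left.mp h'.symm)

theorem pf_upF {g : A} (hg : JoinIrred g) (hi : g * g = g) : PF (upF g) where
  topm := le_top
  up := fun hx hxy => le_trans hx hxy
  mulm := fun hx hy => by
    show g ≤ _ * _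
    rw [← hi]; exact mul_le_mul' hx hy
  botm := fun h => hg.1 (le_bot_iff.mp h)
  prime := fun h => ji_le_sup hg h

theorem sgn_isHom3 [Fintype A] {g : A} (hg : JoinIrred g) (hi : g * g = g) :
    IsHom3 (sgn (upF g)) := by
  have hF := pf_upF hg hi
  exact ⟨sgn_bot hF, sgn_top hF, sgn_inf hF, sgn_sup hF, sgn_mul hF, sgn_himp hF⟩

theorem sgn_upF_self [Fintype A] {g : A} (hg : JoinIrred g) (hi : g * g = g) :
    sgn (upF g) g = 2 := by
  rw [sgn_eq_two_iff]
  intro hR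
  have h1 : g * g ≤ neg g := resid.mpr hR
  rw [hi] at h1
  have h2 : g ≤ ⊥ := by
    calc g = g * g := hi.symm
    _ ≤ neg g * g := mul_le_mul_left h1 g
    _ = ⊥ := neg_mul_self g
  exact hg.1 (le_bot_iff.mp h2)

end NMAux

namespace NMAux
open NMAlgebra

variable {A : Type*} [NMAlgebra A]

section HomStruct
variable [Fintype A]

open scoped Classical

/-- the minimum of the preimage of 2 under a hom -/
noncomputable def mh (h : A → Fin 3) (hh : IsHom3 h) : A :=
  (Finset.univ.filter (fun x : A => h x = 2)).inf'
    ⟨⊤, Finset.mem_filter.mpr ⟨Finset.mem_univ _, hh.2.1⟩⟩ id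

theorem mh_two (h : A → Fin 3) (hh : IsHom3 h) : h (mh h hh) = 2 := by
  have : mh h hh ∈ {x : A | h x = 2} := by
    apply Finset.inf'_mem {x : A | h x = 2}
    · intro x hx y hy
      show h (x ⊓ y) = 2
      rw [hh.2.2.1 x y, hx, hy]
      decide
    · intro i hi
      exact (Finset.mem_filter.mp hi).2
  exact this

theorem mh_le (h : A → Fin 3) (hh : IsHom3 h) {x : A} (hx : h x = 2) : mh h hh ≤ x :=
  Finset.inf'_le id (Finset.mem_filter.mpr ⟨Finset.mem_univ x, hx⟩)

theorem two_iff (h : A → Fin 3) (hh : IsHom3 h) (x : A) : h x = 2 ↔ mh h hh ≤ x := by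
  constructor
  · exact mh_le h hh
  · intro hle
    have e := hh.2.2.1 (mh h hh) x
    rw [inf_eq_left.mpr hle, mh_two h hh] at e
    revert e
    rcases fin3cases (h x) with f | f | f <;> rw [f] <;> decide

theorem hneg_eq (h : A → Fin 3) (hh : IsHom3 h) (x : A) : h (neg x) = neg3 (h x) := by
  show h (himp x ⊥) = _
  rw [hh.2.2.2.2.2 x ⊥, hh.1]
  rcases fin3cases (h x) with f | f | f <;> rw [f] <;> decide

theorem zero_iff (h : A → Fin 3) (hh : IsHom3 h) (x : A) :
    h x = 0 ↔ mh h hh ≤ neg x := by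
  rw [← two_iff h hh, hneg_eq h hh]
  rcases fin3cases (h x) with f | f | f <;> rw [f] <;> decide

theorem mh_ji (h : A → Fin 3) (hh : IsHom3 h) : JoinIrred (mh h hh) := by
  constructor
  · intro e
    have := mh_two h hh
    rw [e, hh.1] at this
    exact absurd this (by decide)
  · intro y z he
    have h2 : h (y ⊔ z) = 2 := by rw [← he]; exact mh_two h hh
    rw [hh.2.2.2.1 y z] at h2
    have : h y = 2 ∨ h z = 2 := by
      revert h2
      rcases fin3cases (h y) with f | f | f <;> rcases fin3cases (h z) with f' | f' | f' <;>
        rw [f, f'] <;> decide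
    rcases this with h' | h'
    · exact Or.inl (le_antisymm (he ▸ le_sup_left) (mh_le h hh h')).symm
    · exact Or.inr (le_antisymm (he ▸ le_sup_right) (mh_le h hh h')).symm

theorem mh_idem (h : A → Fin 3) (hh : IsHom3 h) : mh h hh * mh h hh = mh h hh := by
  apply le_antisymm (mul_le_left _ _)
  apply mh_le h hh
  show h (odot _ _) = 2
  rw [hh.2.2.2.2.1, mh_two h hh]
  decide

theorem hom_no_one_at_idem (h : A → Fin 3) (hh : IsHom3 h) {m : A} (hm : m * m = m) :
    h m ≠ 1 := by
  intro e
  have := hh.2.2.2.2.1 m m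
  rw [show odot m m = m * m from rfl, hm, e] at this
  exact absurd this (by decide)

/-- uniqueness of the hom taking value 2 at a join-irreducible a -/
theorem hom_unique {a : A} (ha : JoinIrred a) (h h' : A → Fin 3)
    (hh : IsHom3 h) (hh' : IsHom3 h') (h2 : h a = 2) (h2' : h' a = 2) : h = h' := by
  have hma : mh h hh ≤ a := mh_le h hh h2
  have hm'a : mh h' hh' ≤ a := mh_le h' hh' h2'
  have key : mh h hh = mh h' hh' := by
    have contra : ¬ (mh h hh ≤ neg (mh h' hh') ∨ mh h' hh' ≤ neg (mh h hh)) := by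
      intro hcase
      have hbot : mh h hh ⊓ mh h' hh' = ⊥ := by
        apply le_bot_iff.mp
        apply le_trans (idem_inf_le (mh_idem h hh) (mh_idem h' hh'))
        rcases hcase with hc | hc
        · calc mh h hh * mh h' hh' ≤ neg (mh h' hh') * mh h' hh' :=
              mul_le_mul_left hc (mh h' hh')
          _ = ⊥ := neg_mul_self (mh h' hh')
        · calc mh h hh * mh h' hh' = mh h' hh' * mh h hh := mul_comm _ _
          _ ≤ neg (mh h hh) * mh h hh := mul_le_mul_left hc (mh h hh)
          _ = ⊥ := neg_mul_self (mh h hh)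
      have hsplit : a = (a ⊓ neg (mh h hh)) ⊔ (a ⊓ neg (mh h' hh')) := by
        calc a = a ⊓ ⊤ := (inf_top_eq a).symm
        _ = a ⊓ neg ⊥ := by rw [neg_bot]
        _ = a ⊓ neg (mh h hh ⊓ mh h' hh') := by rw [hbot]
        _ = a ⊓ (neg (mh h hh) ⊔ neg (mh h' hh')) := by rw [deMorgan_inf]
        _ = (a ⊓ neg (mh h hh)) ⊔ (a ⊓ neg (mh h' hh')) := inf_sup_left a _ _
      rcases ha.2 _ _ hsplit with hs | hs
      · have h1 : a ≤ neg (mh h hh) := hs.le.trans inf_le_right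
        have : mh h hh ≤ ⊥ := by
          calc mh h hh = mh h hh * mh h hh := (mh_idem h hh).symm
          _ ≤ neg (mh h hh) * mh h hh := mul_le_mul_left (hma.trans h1) _
          _ = ⊥ := neg_mul_self _
        exact (mh_ji h hh).1 (le_bot_iff.mp this)
      · have h1 : a ≤ neg (mh h' hh') := hs.le.trans inf_le_right
        have : mh h' hh' ≤ ⊥ := by
          calc mh h' hh' = mh h' hh' * mh h' hh' := (mh_idem h' hh').symm
          _ ≤ neg (mh h' hh') * mh h' hh' := mul_le_mul_left (hm'a.trans h1) _
          _ = ⊥ := neg_mul_self _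
        exact (mh_ji h' hh').1 (le_bot_iff.mp this)
    push_neg at contra
    obtain ⟨hc1, hc2⟩ := contra
    have e1 : h' (mh h hh) = 2 := by
      rcases fin3cases (h' (mh h hh)) with f | f | f
      · exact absurd ((zero_iff h' hh' (mh h hh)).mp f) hc2
      · exact absurd f (hom_no_one_at_idem h' hh' (mh_idem h hh))
      · exact f
    have e2 : h (mh h' hh') = 2 := by
      rcases fin3cases (h (mh h' hh')) with f | f | f
      · exact absurd ((zero_iff h hh (mh h' hh')).mp f) hc1
      · exact absurd f (hom_no_one_at_idem h hh (mh_idem h' hh'))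
      · exact f
    exact le_antisymm (mh_le h hh e2) (mh_le h' hh' e1)
  funext x
  rcases fin3cases (h x) with f | f | f
  · rw [f]
    symm
    rw [zero_iff h' hh', ← key, ← zero_iff h hh]
    exact f
  · rw [f]
    symm
    have n2 : h' x ≠ 2 := by
      intro f2
      have t := (two_iff h' hh' x).mp f2
      rw [← key] at t
      have t2 := (two_iff h hh x).mpr t
      rw [f] at t2
      exact absurd t2 (by decide)
    have n0 : h' x ≠ 0 := by
      intro f2
      have t := (zero_iff h' hh' x).mp f2
      rw [← key] at t
      have t2 := (zero_iff h hh x).mpr t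
      rw [f] at t2
      exact absurd t2 (by decide)
    rcases fin3cases (h' x) with f' | f' | f' <;>
      first | exact absurd f' n0 | exact f' | exact absurd f' n2
  · rw [f]
    symm
    rw [two_iff h' hh', ← key, ← two_iff h hh]
    exact f

/-- non-idempotent join-irreducibles admit no hom with value 2 -/
theorem no_hom_nonidem {a : A} (ha : JoinIrred a) (hni : a * a ≠ a)
    (h : A → Fin 3) (hh : IsHom3 h) (h2 : h a = 2) : False := by
  rcases ha.2 _ _ (idem_decomp a) with hs | hs
  · exact hni hs.symm
  · have hle : a ≤ neg a := hs.le.trans inf_le_right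
    have e := hh.2.2.1 a (neg a)
    rw [← hs, h2, hneg_eq h hh, h2] at e
    exact absurd e (by decide)

end HomStruct

/-- uniqueness of valuations determined on ⊥ and join-irreducibles -/
theorem val_unique {B : Type*} [Lattice B] [OrderBot B] [Fintype B] {ν μ : B → ℝ}
    (hν : IsValuation ν) (hμ : IsValuation μ) (hb : ν ⊥ = μ ⊥)
    (hji : ∀ g, JoinIrred g → ν g = μ g) : ∀ a, ν a = μ a := by
  intro a
  induction a using WellFoundedLT.induction with
  | _ a IH =>
    by_cases hbot : a = ⊥
    · rw [hbot]; exact hb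
    by_cases hja : JoinIrred a
    · exact hji a hja
    unfold JoinIrred at hja
    push_neg at hja
    obtain ⟨y, z, hyz, hy, hz⟩ := hja hbot
    have hy' : y < a := lt_of_le_of_ne (hyz ▸ le_sup_left) (Ne.symm hy)
    have hz' : z < a := lt_of_le_of_ne (hyz ▸ le_sup_right) (Ne.symm hz)
    have hw' : y ⊓ z < a := lt_of_le_of_lt inf_le_left hy'
    have e1 := hν y z
    have e2 := hμ y z
    rw [← hyz] at e1 e2
    have i1 := IH y hy'
    have i2 := IH z hz'
    have i3 := IH (y ⊓ z) hw'
    linarith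

end NMAux

theorem stmt12 {A : Type*} [NMAlgebra A] [Fintype A] (ν : A → ℝ)
    (hν : IsIdemEuler ν) (a : A) :
    ν a = Nat.card {h : A → Fin 3 // IsHom3 h ∧ h a = 2} := by
  classical
  obtain ⟨hval, hb, hj⟩ := hν
  have hμ : IsValuation (fun c : A => (Nat.card {h : A → Fin 3 // IsHom3 h ∧ h c = 2} : ℝ)) := by
    intro x y
    dsimp only
    have key : ∀ c : A, Nat.card {h : A → Fin 3 // IsHom3 h ∧ h c = 2}
        = ({h : A → Fin 3 | IsHom3 h ∧ h c = 2}).ncard := fun c => Nat.card_coe_set_eq _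
    have max3 : ∀ p q : Fin 3, max p q = 2 ↔ (p = 2 ∨ q = 2) := by decide
    have min3 : ∀ p q : Fin 3, min p q = 2 ↔ (p = 2 ∧ q = 2) := by decide
    have eq1 : {h : A → Fin 3 | IsHom3 h ∧ h (x ⊔ y) = 2}
        = {h : A → Fin 3 | IsHom3 h ∧ h x = 2} ∪ {h : A → Fin 3 | IsHom3 h ∧ h y = 2} := by
      ext h
      simp only [Set.mem_setOf_eq, Set.mem_union]
      constructor
      · rintro ⟨hh, h2⟩
        rw [hh.2.2.2.1 x y, max3] at h2
        rcases h2 with h2 | h2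
        · exact Or.inl ⟨hh, h2⟩
        · exact Or.inr ⟨hh, h2⟩
      · rintro (⟨hh, h2⟩ | ⟨hh, h2⟩) <;> refine ⟨hh, ?_⟩ <;>
          rw [hh.2.2.2.1 x y, max3] <;> [exact Or.inl h2; exact Or.inr h2]
    have eq2 : {h : A → Fin 3 | IsHom3 h ∧ h (x ⊓ y) = 2}
        = {h : A → Fin 3 | IsHom3 h ∧ h x = 2} ∩ {h : A → Fin 3 | IsHom3 h ∧ h y = 2} := by
      ext h
      simp only [Set.mem_setOf_eq, Set.mem_inter_iff]
      constructor
      · rintro ⟨hh, h2⟩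
        rw [hh.2.2.1 x y, min3] at h2
        exact ⟨⟨hh, h2.1⟩, ⟨hh, h2.2⟩⟩
      · rintro ⟨⟨hh, h2⟩, ⟨_, h2'⟩⟩
        exact ⟨hh, by rw [hh.2.2.1 x y, min3]; exact ⟨h2, h2'⟩⟩
    have hcard : Nat.card {h : A → Fin 3 // IsHom3 h ∧ h x = 2}
        + Nat.card {h : A → Fin 3 // IsHom3 h ∧ h y = 2}
        = Nat.card {h : A → Fin 3 // IsHom3 h ∧ h (x ⊔ y) = 2}
        + Nat.card {h : A → Fin 3 // IsHom3 h ∧ h (x ⊓ y) = 2} := by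
      rw [key, key, key, key, eq1, eq2]
      exact (Set.ncard_union_add_ncard_inter _ _ (Set.toFinite _) (Set.toFinite _)).symm
    exact_mod_cast hcard
  have hbμ : ν ⊥ = (Nat.card {h : A → Fin 3 // IsHom3 h ∧ h (⊥:A) = 2} : ℝ) := by
    rw [hb]
    have : IsEmpty {h : A → Fin 3 // IsHom3 h ∧ h (⊥:A) = 2} := by
      refine ⟨fun ⟨h, hh, h2⟩ => ?_⟩
      rw [hh.1] at h2
      exact absurd h2 (by decide)
    rw [Nat.card_of_isEmpty]
    norm_num
  have hjμ : ∀ g : A, JoinIrred g →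
      ν g = (Nat.card {h : A → Fin 3 // IsHom3 h ∧ h g = 2} : ℝ) := by
    intro g hg
    by_cases hi : NMAlgebra.odot g g = g
    · rw [(hj g hg).1 hi]
      have hi' : g * g = g := hi
      have huniq : Nat.card {h : A → Fin 3 // IsHom3 h ∧ h g = 2} = 1 := by
        rw [Nat.card_eq_one_iff_unique]
        constructor
        · constructor
          rintro ⟨h1, hh1, e1⟩ ⟨h2, hh2, e2⟩
          exact Subtype.ext (NMAux.hom_unique hg h1 h2 hh1 hh2 e1 e2)
        · exact ⟨⟨NMAux.sgn (NMAux.upF g), NMAux.sgn_isHom3 hg hi', NMAux.sgn_upF_self hg hi'⟩⟩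
      rw [huniq]
      norm_num
    · rw [(hj g hg).2 hi]
      have : IsEmpty {h : A → Fin 3 // IsHom3 h ∧ h g = 2} := by
        refine ⟨fun ⟨h, hh, h2⟩ => ?_⟩
        exact NMAux.no_hom_nonidem hg hi h hh h2
      rw [Nat.card_of_isEmpty]
      norm_num
  exact NMAux.val_unique hval hμ hbμ hjμ a
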